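/- Let f be a nonzero Laurent series analytic on the annulus A[r1,r2] with 0 < r1 ≤ r2. Call r ∈ [r1,r2] a critical radius of f if K(f,r) > k(f,r). Then the set of critical radii of f is discrete in [r1,r2]: every critical radius r' has an open neighborhood in ℝ containing no other critical radius of f. -/

import Mathlib

open Filter Topology

variable {F : Type*} [NontriviallyNormedField F]

/-- Value of the power series with coefficients `a` at `z`. -/
noncomputable def psEval (a : ℕ → F) (z : F) : F := ∑' n : ℕ, a n * z ^ n

/-- Value of the Laurent series with coefficients `c` at `z`. -/
noncomputable def lEval (c : ℤ → F) (z : F) : F := ∑' n : ℤ, c n * z ^ n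

/-- Gauss norm `|f|_r = sup_n |a_n| r^n` of a power series. -/
noncomputable def pNorm (a : ℕ → F) (r : ℝ) : ℝ := ⨆ n : ℕ, ‖a n‖ * r ^ n

/-- Gauss norm `|f|_r = sup_n |c_n| r^n` of a Laurent series. -/
noncomputable def lNorm (c : ℤ → F) (r : ℝ) : ℝ := ⨆ n : ℤ, ‖c n‖ * r ^ n

/-- The Laurent series `c` is analytic on the annulus `A[r1,r2]`. -/
def LaurentOn (c : ℤ → F) (r1 r2 : ℝ) : Prop :=
  ∀ r : ℝ, r1 ≤ r → r ≤ r2 → Tendsto (fun n : ℤ => ‖c n‖ * r ^ n) cofinite (nhds 0)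

/-- The Laurent series `c` is analytic on `A[r1,∞)`. -/
def LaurentOnInfty (c : ℤ → F) (r1 : ℝ) : Prop :=
  ∀ r : ℝ, r1 ≤ r → Tendsto (fun n : ℤ => ‖c n‖ * r ^ n) cofinite (nhds 0)

/-- The power series `a` is analytic on the closed ball `B_{≤ r}`. -/
def PSOnClosed (a : ℕ → F) (r : ℝ) : Prop :=
  Tendsto (fun n : ℕ => ‖a n‖ * r ^ n) atTop (nhds 0)

/-- The power series `a` is analytic on the open ball `B_{< R}`. -/
def PSOnOpen (a : ℕ → F) (R : ℝ) : Prop :=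
  ∀ r : ℝ, 0 < r → r < R → Tendsto (fun n : ℕ => ‖a n‖ * r ^ n) atTop (nhds 0)

/-- The power series `a` is entire: it converges on all of `F`. -/
def Entire (a : ℕ → F) : Prop :=
  ∀ r : ℝ, 0 < r → Tendsto (fun n : ℕ => ‖a n‖ * r ^ n) atTop (nhds 0)

/-- `k(f,r)` for a Laurent series. -/
noncomputable def kk (c : ℤ → F) (r : ℝ) : ℤ := sInf {n : ℤ | ‖c n‖ * r ^ n = lNorm c r}

/-- `K(f,r)` for a Laurent series. -/
noncomputable def KK (c : ℤ → F) (r : ℝ) : ℤ := sSup {n : ℤ | ‖c n‖ * r ^ n = lNorm c r}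

/-- Product of two Laurent series. -/
noncomputable def laurentMul (c d : ℤ → F) : ℤ → F := fun n => ∑' i : ℤ, c i * d (n - i)

/-- The Laurent series `1`. -/
noncomputable def laurentOne : ℤ → F := fun n => if n = 0 then 1 else 0

/-- Gauss norm of a polynomial. -/
noncomputable def pgNorm (P : Polynomial F) (r : ℝ) : ℝ := ⨆ n : ℕ, ‖P.coeff n‖ * r ^ n

/-- `k(P,r)` for a polynomial. -/
noncomputable def kP (P : Polynomial F) (r : ℝ) : ℕ :=
  sInf {n : ℕ | ‖P.coeff n‖ * r ^ n = pgNorm P r}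

/-- `K(P,r)` for a polynomial. -/
noncomputable def KP (P : Polynomial F) (r : ℝ) : ℕ :=
  sSup {n : ℕ | ‖P.coeff n‖ * r ^ n = pgNorm P r}

/-- A polynomial regarded as a Laurent series. -/
noncomputable def polyToLaurent (P : Polynomial F) : ℤ → F :=
  fun n => if 0 ≤ n then P.coeff n.toNat else 0

/-- `f` vanishes to order exactly `m` at `z0`, as witnessed by a convergent local
power series expansion of `f` about `z0`. -/
def HasOrderAt (f : F → F) (z0 : F) (m : ℕ) : Prop :=
  ∃ δ > (0 : ℝ), ∃ b : ℕ → F,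
    (∀ z : F, ‖z - z0‖ < δ → f z = ∑' n : ℕ, b n * (z - z0) ^ n) ∧
    (∀ j < m, b j = 0) ∧ b m ≠ 0

/-- Order of vanishing at `0` of a power series. -/
noncomputable def ord0 (c : ℕ → F) : ℕ := sInf {n : ℕ | c n ≠ 0}

/-- Radius of convergence of a power series: the sup of the radii `r` such that
the terms `|c_j| r^j` tend to `0`. -/
noncomputable def convRadius (c : ℕ → F) : ENNReal :=
  ⨆ (r : NNReal) (_ : Tendsto (fun j : ℕ => ‖c j‖ * (r : ℝ) ^ j) atTop (nhds 0)), (r : ENNReal)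


section AuxStmt7

variable {F : Type*} [NontriviallyNormedField F]

lemma aux7_finite {c : ℤ → F} {r1 r2 r : ℝ} (hc : LaurentOn c r1 r2)
    (hr1 : r1 ≤ r) (hr2 : r ≤ r2) {ε : ℝ} (hε : 0 < ε) :
    {n : ℤ | ε ≤ ‖c n‖ * r ^ n}.Finite := by
  have h : ∀ᶠ n in Filter.cofinite, ‖c n‖ * r ^ n < ε :=
    Filter.Tendsto.eventually_lt_const hε (hc r hr1 hr2)
  have := Filter.eventually_cofinite.mp h
  simpa [not_lt] using this

lemma aux7_bdd {c : ℤ → F} {r1 r2 r : ℝ} (hc : LaurentOn c r1 r2)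
    (hr1 : r1 ≤ r) (hr2 : r ≤ r2) :
    BddAbove (Set.range fun n : ℤ => ‖c n‖ * r ^ n) := by
  have hf := aux7_finite hc hr1 hr2 one_pos
  obtain ⟨M, hM⟩ := (hf.image fun n => ‖c n‖ * r ^ n).bddAbove
  refine ⟨max M 1, ?_⟩
  rintro x ⟨n, rfl⟩
  by_cases h : (1:ℝ) ≤ ‖c n‖ * r ^ n
  · exact le_max_of_le_left (hM ⟨n, h, rfl⟩)
  · exact le_max_of_le_right (not_le.mp h).le

lemma aux7_attain {c : ℤ → F} {r1 r2 r : ℝ} (h1 : 0 < r1) (hc0 : c ≠ 0)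
    (hc : LaurentOn c r1 r2) (hr1 : r1 ≤ r) (hr2 : r ≤ r2) :
    0 < lNorm c r ∧ (∀ n : ℤ, ‖c n‖ * r ^ n ≤ lNorm c r) ∧
      {n : ℤ | ‖c n‖ * r ^ n = lNorm c r}.Finite ∧
      {n : ℤ | ‖c n‖ * r ^ n = lNorm c r}.Nonempty := by
  have hr0 : 0 < r := lt_of_lt_of_le h1 hr1
  have hbdd := aux7_bdd hc hr1 hr2
  have hle : ∀ n : ℤ, ‖c n‖ * r ^ n ≤ lNorm c r := fun n => le_ciSup hbdd n
  obtain ⟨m, hm⟩ : ∃ m, c m ≠ 0 := by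
    by_contra h; push_neg at h; exact hc0 (funext h)
  have hpos : 0 < lNorm c r :=
    lt_of_lt_of_le (mul_pos (norm_pos_iff.mpr hm) (zpow_pos hr0 m)) (hle m)
  set L := lNorm c r with hL
  have hhalf : 0 < L / 2 := by positivity
  have hT : {n : ℤ | L / 2 ≤ ‖c n‖ * r ^ n}.Finite := aux7_finite hc hr1 hr2 hhalf
  obtain ⟨n1, hn1⟩ : ∃ n : ℤ, L / 2 < ‖c n‖ * r ^ n := by
    exact exists_lt_of_lt_ciSup (half_lt_self hpos)
  have hTne : {n : ℤ | L / 2 ≤ ‖c n‖ * r ^ n}.Nonempty := ⟨n1, hn1.le⟩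
  obtain ⟨n0, hn0T, hn0max⟩ := Set.exists_max_image _ (fun n => ‖c n‖ * r ^ n) hT hTne
  have hub : ∀ m : ℤ, ‖c m‖ * r ^ m ≤ ‖c n0‖ * r ^ n0 := by
    intro m
    by_cases h : L / 2 ≤ ‖c m‖ * r ^ m
    · exact hn0max m h
    · exact le_trans (not_le.mp h).le (le_trans hn1.le (hn0max n1 hn1.le))
  have hattain : ‖c n0‖ * r ^ n0 = L := by
    refine le_antisymm (hle n0) ?_
    rw [hL, lNorm]
    exact ciSup_le hub
  refine ⟨hpos, hle, ?_, ⟨n0, hattain⟩⟩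
  refine hT.subset ?_
  intro n hn
  rw [Set.mem_setOf_eq] at hn ⊢
  rw [hn]
  linarith

lemma aux7_mem {c : ℤ → F} {r1 r2 r : ℝ} (h1 : 0 < r1) (hc0 : c ≠ 0)
    (hc : LaurentOn c r1 r2) (hr1 : r1 ≤ r) (hr2 : r ≤ r2) :
    ‖c (kk c r)‖ * r ^ (kk c r) = lNorm c r ∧
    ‖c (KK c r)‖ * r ^ (KK c r) = lNorm c r ∧ kk c r ≤ KK c r := by
  obtain ⟨hpos, hle, hfin, hne⟩ := aux7_attain h1 hc0 hc hr1 hr2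
  have hbb := hfin.bddBelow
  have hba := hfin.bddAbove
  have h1' := hne.csInf_mem hfin
  have h2' := hne.csSup_mem hfin
  exact ⟨h1', h2', csInf_le hbb h2'⟩

lemma aux7_cne {c : ℤ → F} {r1 r2 r : ℝ} {n : ℤ} (h1 : 0 < r1) (hc0 : c ≠ 0)
    (hc : LaurentOn c r1 r2) (hr1 : r1 ≤ r) (hr2 : r ≤ r2)
    (h : ‖c n‖ * r ^ n = lNorm c r) : c n ≠ 0 := by
  obtain ⟨hpos, _, _, _⟩ := aux7_attain h1 hc0 hc hr1 hr2
  intro h0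
  rw [h0] at h
  simp at h
  rw [← h] at hpos
  exact lt_irrefl _ hpos

lemma aux7_mono {c : ℤ → F} {r1 r2 r s : ℝ} (h1 : 0 < r1) (hc0 : c ≠ 0)
    (hc : LaurentOn c r1 r2) (hr1 : r1 ≤ r) (hrs : r < s) (hs2 : s ≤ r2) :
    KK c r ≤ kk c s := by
  have hr2 : r ≤ r2 := le_trans hrs.le hs2
  have hs1 : r1 ≤ s := le_trans hr1 hrs.le
  obtain ⟨hposr, hler, hfinr, hner⟩ := aux7_attain h1 hc0 hc hr1 hr2
  obtain ⟨hposs, hles, hfins, hnes⟩ := aux7_attain h1 hc0 hc hs1 hs2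
  obtain ⟨-, hKr, -⟩ := aux7_mem h1 hc0 hc hr1 hr2
  set N := KK c r with hN
  have hr0 : 0 < r := lt_of_lt_of_le h1 hr1
  have hs0 : 0 < s := hr0.trans hrs
  refine le_csInf hnes ?_
  intro m hm
  rw [Set.mem_setOf_eq] at hm
  by_contra hlt
  push_neg at hlt
  have hcN : c N ≠ 0 := aux7_cne h1 hc0 hc hr1 hr2 hKr
  have hcm : c m ≠ 0 := aux7_cne h1 hc0 hc hs1 hs2 hm
  have hcmpos : 0 < ‖c m‖ := norm_pos_iff.mpr hcm
  have hcNpos : 0 < ‖c N‖ := norm_pos_iff.mpr hcN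
  have i1 : ‖c m‖ * r ^ m ≤ ‖c N‖ * r ^ N := by rw [hKr]; exact hler m
  have i2 : ‖c N‖ * s ^ N ≤ ‖c m‖ * s ^ m := by rw [hm]; exact hles N
  have hmul : (‖c m‖ * r ^ m) * (‖c N‖ * s ^ N) ≤ (‖c N‖ * r ^ N) * (‖c m‖ * s ^ m) :=
    mul_le_mul i1 i2 (by positivity) (by positivity)
  have hab : (0:ℝ) < ‖c m‖ * ‖c N‖ := mul_pos hcmpos hcNpos
  have hcore : r ^ m * s ^ N ≤ r ^ N * s ^ m := by
    rw [show (‖c m‖ * r ^ m) * (‖c N‖ * s ^ N) = (‖c m‖ * ‖c N‖) * (r ^ m * s ^ N) by ring,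
        show (‖c N‖ * r ^ N) * (‖c m‖ * s ^ m) = (‖c m‖ * ‖c N‖) * (r ^ N * s ^ m) by ring]
      at hmul
    exact le_of_mul_le_mul_left hmul hab
  set d : ℕ := (N - m).toNat with hdd
  have hdz : (d : ℤ) = N - m := Int.toNat_of_nonneg (by omega)
  have hdne : d ≠ 0 := by omega
  have hsplit_s : s ^ N = s ^ m * s ^ d := by
    rw [← zpow_natCast s d, ← zpow_add₀ hs0.ne']
    congr 1
    omega
  have hsplit_r : r ^ N = r ^ m * r ^ d := by
    rw [← zpow_natCast r d, ← zpow_add₀ hr0.ne']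
    congr 1
    omega
  rw [hsplit_s, hsplit_r] at hcore
  have hx : (0:ℝ) < r ^ m * s ^ m := mul_pos (zpow_pos hr0 m) (zpow_pos hs0 m)
  have hfinal : s ^ d ≤ r ^ d := by
    rw [show r ^ m * (s ^ m * s ^ d) = (r ^ m * s ^ m) * s ^ d by ring,
        show r ^ m * r ^ d * s ^ m = (r ^ m * s ^ m) * r ^ d by ring] at hcore
    exact le_of_mul_le_mul_left hcore hx
  have hkey : r ^ d < s ^ d := pow_lt_pow_left₀ hrs hr0.le hdne
  exact absurd hfinal (not_le.mpr hkey)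

end AuxStmt7

/-- **Discreteness of critical radii.** For a nonzero Laurent series analytic on
`A[r1,r2]` with `0 < r1 ≤ r2`, every critical radius `r'` (a radius with
`k(f,r') < K(f,r')`) has a neighborhood containing no other critical radius. -/
theorem stmt7 {F : Type*} [NontriviallyNormedField F] [CompleteSpace F] [IsAlgClosed F]
    (hna : IsNonarchimedean (fun x : F => ‖x‖))
    (r1 r2 : ℝ) (h1 : 0 < r1) (h12 : r1 ≤ r2)
    (c : ℤ → F) (hc0 : c ≠ 0) (hc : LaurentOn c r1 r2)
    (r' : ℝ) (hr'1 : r1 ≤ r') (hr'2 : r' ≤ r2) (hcrit : kk c r' < KK c r') :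
    ∃ ε > (0 : ℝ), ∀ r : ℝ, r1 ≤ r → r ≤ r2 → kk c r < KK c r → |r - r'| < ε → r = r' := by
  classical
  set S : Set ℝ := {r : ℝ | r1 ≤ r ∧ r ≤ r2 ∧ kk c r < KK c r} with hSdef
  have hmono : ∀ a b : ℝ, a ∈ S → b ∈ S → a < b → KK c a < KK c b := by
    intro a b ha hb hab
    exact lt_of_le_of_lt (aux7_mono h1 hc0 hc ha.1 hab hb.2.1) hb.2.2
  have hinj : Set.InjOn (KK c) S := by
    intro a ha b hb hab
    rcases lt_trichotomy a b with h | h | h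
    · exact absurd hab (ne_of_lt (hmono a b ha hb h))
    · exact h
    · exact absurd hab.symm (ne_of_lt (hmono b a hb ha h))
  have hbdd : ∀ r ∈ S, KK c r ∈ Set.Icc (kk c r1) (KK c r2) := by
    intro r hr
    obtain ⟨hra, hrb, _⟩ := hr
    constructor
    · -- kk c r1 ≤ KK c r
      rcases eq_or_lt_of_le hra with h | h
      · obtain ⟨-, -, hle⟩ := aux7_mem h1 hc0 hc (le_refl r1) h12
        rw [← h]; exact hle
      · obtain ⟨-, -, hle1⟩ := aux7_mem h1 hc0 hc (le_refl r1) h12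
        obtain ⟨-, -, hler⟩ := aux7_mem h1 hc0 hc hra hrb
        have := aux7_mono h1 hc0 hc (le_refl r1) h hrb
        exact le_trans hle1 (le_trans this hler)
    · -- KK c r ≤ KK c r2
      rcases eq_or_lt_of_le hrb with h | h
      · rw [h]
      · obtain ⟨-, -, hle2⟩ := aux7_mem h1 hc0 hc h12 (le_refl r2)
        exact le_trans (aux7_mono h1 hc0 hc hra h (le_refl r2)) hle2
  have hfin : S.Finite := by
    refine Set.Finite.of_finite_image ?_ hinj
    exact (Set.finite_Icc (kk c r1) (KK c r2)).subset (by
      rintro x ⟨r, hr, rfl⟩; exact hbdd r hr)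
  -- r' is a critical radius
  have hr'S : r' ∈ S := ⟨hr'1, hr'2, hcrit⟩
  set T : Set ℝ := S \ {r'} with hTdef
  have hTfin : T.Finite := hfin.diff
  by_cases hTne : T.Nonempty
  · obtain ⟨ε0, hε0pos, hε0⟩ : ∃ ε0 > (0:ℝ), ∀ x ∈ T, ε0 ≤ |x - r'| := by
      obtain ⟨y, hyT, hymin⟩ :=
        Set.exists_min_image _ (fun x => |x - r'|) hTfin hTne
      refine ⟨|y - r'|, ?_, fun x hx => hymin x hx⟩
      have hy' : y ≠ r' := hyT.2
      exact abs_pos.mpr (sub_ne_zero.mpr hy')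
    refine ⟨ε0, hε0pos, ?_⟩
    intro r hra hrb hcr habs
    by_contra hne
    have hrT : r ∈ T := ⟨⟨hra, hrb, hcr⟩, hne⟩
    exact absurd habs (not_lt.mpr (hε0 r hrT))
  · refine ⟨1, one_pos, ?_⟩
    intro r hra hrb hcr _
    by_contra hne
    exact hTne ⟨r, ⟨hra, hrb, hcr⟩, hne⟩
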